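/- Δ maps the ideal I^{l−1} onto the submodule x^{l−1}·B; that is, Δ(I^{l−1}) = x^{l−1}·B, so Δ restricts to an isomorphism of A-modules from I^{l−1} to x^{l−1}·B. -/

import Mathlib

open MvPolynomial

set_option maxHeartbeats 800000
set_option synthInstance.maxHeartbeats 200000

noncomputable section

/-- `A = ℤ[x,y]/(x^l − y^l)`, with `x = X 0`, `y = X 1`. -/
def IA (l : ℕ) : Ideal (MvPolynomial (Fin 2) ℤ) := Ideal.span {X 0 ^ l - X 1 ^ l}

/-- `B = ℤ[x,t]/(t^l − 1)`, with `x = X 0`, `t = X 1`. -/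
def IB (l : ℕ) : Ideal (MvPolynomial (Fin 2) ℤ) := Ideal.span {X 1 ^ l - 1}

abbrev Aq (l : ℕ) := MvPolynomial (Fin 2) ℤ ⧸ IA l
abbrev Bq (l : ℕ) := MvPolynomial (Fin 2) ℤ ⧸ IB l

/-- The class of `x` in `A`. -/
def xA (l : ℕ) : Aq l := Ideal.Quotient.mk (IA l) (X 0)
/-- The class of `y` in `A`. -/
def yA (l : ℕ) : Aq l := Ideal.Quotient.mk (IA l) (X 1)
/-- The class of `x` in `B`. -/
def xB (l : ℕ) : Bq l := Ideal.Quotient.mk (IB l) (X 0)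
/-- The class of `t` in `B`. -/
def tB (l : ℕ) : Bq l := Ideal.Quotient.mk (IB l) (X 1)

lemma tB_pow (l : ℕ) : tB l ^ l = 1 := by
  have h : (X 1 ^ l - 1 : MvPolynomial (Fin 2) ℤ) ∈ IB l := Ideal.subset_span rfl
  have h2 : Ideal.Quotient.mk (IB l) (X 1 ^ l - 1) = 0 :=
    Ideal.Quotient.eq_zero_iff_mem.mpr h
  have h3 : tB l ^ l - 1 = 0 := by
    rw [tB, ← map_pow, ← map_one (Ideal.Quotient.mk (IB l)), ← map_sub]
    simpa using h2
  exact sub_eq_zero.mp h3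

/-- The diagonal ring homomorphism `Δ : A → B`, determined by `x ↦ x`, `y ↦ t·x`. -/
def Δmap (l : ℕ) : Aq l →+* Bq l :=
  Ideal.Quotient.lift (IA l) ((aeval ![xB l, tB l * xB l]).toRingHom)
    (by
      intro p hp
      obtain ⟨c, rfl⟩ := Ideal.mem_span_singleton'.mp hp
      have key : (aeval ![xB l, tB l * xB l]) (X 0 ^ l - X 1 ^ l : MvPolynomial (Fin 2) ℤ) = 0 := by
        simp [mul_pow, tB_pow l]
      simp only [AlgHom.toRingHom_eq_coe, RingHom.coe_coe, map_mul, key, mul_zero])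

lemma Δmap_xA (l : ℕ) : Δmap l (xA l) = xB l := by
  simp [Δmap, xA]

lemma Δmap_yA (l : ℕ) : Δmap l (yA l) = tB l * xB l := by
  simp [Δmap, yA]

/-- The ideal `I = (x, y) ⊆ A`. -/
def Iid (l : ℕ) : Ideal (Aq l) := Ideal.span {xA l, yA l}

/-- `B` is an `A`-algebra (hence an `A`-module) via `Δ`. -/
instance instAlgAB (l : ℕ) : Algebra (Aq l) (Bq l) := (Δmap l).toAlgebra

/-- The `A`-submodule `x^m·B = {x^m·b : b ∈ B}` of `B`. -/
def xmB (l m : ℕ) : Submodule (Aq l) (Bq l) :=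
  LinearMap.range (LinearMap.mulLeft (Aq l) (xB l ^ m))

lemma xA_pow_eq (l : ℕ) : xA l ^ l = yA l ^ l := by
  have h : (X 0 ^ l - X 1 ^ l : MvPolynomial (Fin 2) ℤ) ∈ IA l := Ideal.subset_span rfl
  have h2 := Ideal.Quotient.eq_zero_iff_mem.mpr h
  rw [map_sub, map_pow, map_pow, sub_eq_zero] at h2
  exact h2

lemma reduce_pow (l : ℕ) (j : ℕ) :
    yA l ^ j = xA l ^ (j - j % l) * yA l ^ (j % l) := by
  conv_lhs => rw [← Nat.div_add_mod j l]
  rw [pow_add, pow_mul, ← xA_pow_eq, ← pow_mul]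
  congr 2
  have h := Nat.div_add_mod j l
  omega

lemma tB_pow_mod (l : ℕ) (j : ℕ) : tB l ^ j = tB l ^ (j % l) := by
  conv_lhs => rw [← Nat.div_add_mod j l]
  rw [pow_add, pow_mul, tB_pow, one_pow, one_mul]

/-- The coefficientwise retraction data. -/
def fmon (l : ℕ) (d : Fin 2 →₀ ℕ) : Aq l := xA l ^ (d 0 - d 1 % l) * yA l ^ (d 1 % l)

/-- A ℤ-linear retraction candidate `ℤ[x,t] → A`. -/
def σmap (l : ℕ) : MvPolynomial (Fin 2) ℤ →ₗ[ℤ] Aq l :=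
  (Finsupp.lsum ℤ fun d => LinearMap.toSpanSingleton ℤ (Aq l) (fmon l d)) ∘ₗ
    (AddMonoidAlgebra.coeffLinearEquiv ℤ).toLinearMap

lemma σmap_monomial (l : ℕ) (d : Fin 2 →₀ ℕ) (c : ℤ) :
    σmap l (monomial d c) = c • fmon l d := by
  rw [← MvPolynomial.single_eq_monomial]
  simp [σmap]

lemma σmap_IB (l : ℕ) (q : MvPolynomial (Fin 2) ℤ) :
    σmap l ((X 1 ^ l - 1) * q) = 0 := by
  induction q using MvPolynomial.induction_on' with
  | monomial d c =>
    have key : fmon l (Finsupp.single 1 l + d) = fmon l d := by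
      have h0 : ((Finsupp.single 1 l + d) : Fin 2 →₀ ℕ) 0 = d 0 := by
        simp [Finsupp.single_apply]
      have h1 : ((Finsupp.single 1 l + d) : Fin 2 →₀ ℕ) 1 = l + d 1 := by
        simp [Finsupp.single_apply]
      unfold fmon
      rw [h0, h1, Nat.add_mod_left]
    rw [sub_mul, one_mul, map_sub, X_pow_eq_monomial, monomial_mul, one_mul,
      σmap_monomial, σmap_monomial, key, sub_self]
  | add p q hp hq =>
    rw [mul_add, map_add, hp, hq, add_zero]

/-- `Δ` lifted to polynomial rings: `x ↦ x`, `y ↦ t·x`. -/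
def Dmap : MvPolynomial (Fin 2) ℤ →ₐ[ℤ] MvPolynomial (Fin 2) ℤ := aeval ![X 0, X 1 * X 0]

lemma fin2_decomp (d : Fin 2 →₀ ℕ) : d = Finsupp.single 0 (d 0) + Finsupp.single 1 (d 1) := by
  ext i
  fin_cases i <;> simp [Finsupp.single_apply]

lemma monomial_eq_two (c : ℤ) (n r : ℕ) :
    (monomial (Finsupp.single 0 n + Finsupp.single 1 r) c : MvPolynomial (Fin 2) ℤ) =
      C c * X 0 ^ n * X 1 ^ r := by
  rw [monomial_eq, Finsupp.prod_fintype _ _ (fun i => pow_zero _), Fin.prod_univ_two]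
  simp [Finsupp.single_apply, mul_assoc]

lemma Dmap_monomial (d : Fin 2 →₀ ℕ) (c : ℤ) :
    Dmap (monomial d c) =
      monomial (Finsupp.single 0 (d 0 + d 1) + Finsupp.single 1 (d 1)) c := by
  conv_lhs => rw [fin2_decomp d, monomial_eq_two]
  rw [monomial_eq_two]
  simp only [Dmap, map_mul, map_pow, aeval_X, Matrix.cons_val_zero, Matrix.cons_val_one,
    Matrix.head_cons, show (C c : MvPolynomial (Fin 2) ℤ) = ((c : ℤ) : MvPolynomial (Fin 2) ℤ)
      from rfl, map_intCast]
  ring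

lemma mk_C (l : ℕ) (I : Ideal (MvPolynomial (Fin 2) ℤ)) (c : ℤ) :
    Ideal.Quotient.mk I (C c) = (c : MvPolynomial (Fin 2) ℤ ⧸ I) := by
  rw [show (C c : MvPolynomial (Fin 2) ℤ) = ((c : ℤ) : MvPolynomial (Fin 2) ℤ) from rfl,
    map_intCast]

lemma mk_monomial (l : ℕ) (d : Fin 2 →₀ ℕ) (c : ℤ) :
    Ideal.Quotient.mk (IA l) (monomial d c) = c • (xA l ^ (d 0) * yA l ^ (d 1)) := by
  conv_lhs => rw [fin2_decomp d, monomial_eq_two]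
  rw [map_mul, map_mul, map_pow, map_pow, mk_C l, zsmul_eq_mul, mul_assoc]
  rfl

lemma σmap_D (l : ℕ) (p : MvPolynomial (Fin 2) ℤ) :
    σmap l (Dmap p) = Ideal.Quotient.mk (IA l) p := by
  induction p using MvPolynomial.induction_on' with
  | monomial d c =>
    rw [Dmap_monomial, σmap_monomial, mk_monomial]
    congr 1
    unfold fmon
    have h0 : ((Finsupp.single 0 (d 0 + d 1) + Finsupp.single 1 (d 1)) : Fin 2 →₀ ℕ) 0
        = d 0 + d 1 := by simp [Finsupp.single_apply]
    have h1 : ((Finsupp.single 0 (d 0 + d 1) + Finsupp.single 1 (d 1)) : Fin 2 →₀ ℕ) 1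
        = d 1 := by simp [Finsupp.single_apply]
    rw [h0, h1]
    have he : d 0 + d 1 - d 1 % l = d 0 + (d 1 - d 1 % l) := by
      have := Nat.mod_le (d 1) l
      omega
    rw [he, pow_add, mul_assoc, ← reduce_pow]
  | add p q hp hq =>
    rw [map_add, map_add, map_add, hp, hq]

lemma Δmap_mk (l : ℕ) (p : MvPolynomial (Fin 2) ℤ) :
    Δmap l (Ideal.Quotient.mk (IA l) p) = Ideal.Quotient.mk (IB l) (Dmap p) := by
  induction p using MvPolynomial.induction_on with
  | C c =>
    rw [mk_C l, map_intCast, show Dmap (C c) = C c from by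
      simp [Dmap, show (C c : MvPolynomial (Fin 2) ℤ) = ((c : ℤ) : MvPolynomial (Fin 2) ℤ)
        from rfl, map_intCast], mk_C l]
  | add p q hp hq =>
    have h1 : Ideal.Quotient.mk (IA l) (p + q)
        = Ideal.Quotient.mk (IA l) p + Ideal.Quotient.mk (IA l) q := map_add _ _ _
    have h2 : Ideal.Quotient.mk (IB l) (Dmap (p + q))
        = Ideal.Quotient.mk (IB l) (Dmap p) + Ideal.Quotient.mk (IB l) (Dmap q) := by
      rw [map_add, map_add]
    rw [h1, h2, map_add, hp, hq]
  | mul_X p i hp =>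
    have h1 : Ideal.Quotient.mk (IA l) (p * X i)
        = Ideal.Quotient.mk (IA l) p * Ideal.Quotient.mk (IA l) (X i) := map_mul _ _ _
    have h2 : Ideal.Quotient.mk (IB l) (Dmap (p * X i))
        = Ideal.Quotient.mk (IB l) (Dmap p) * Ideal.Quotient.mk (IB l) (Dmap (X i)) := by
      rw [map_mul, map_mul]
    rw [h1, h2, map_mul, hp]
    congr 1
    fin_cases i
    · show Δmap l (xA l) = Ideal.Quotient.mk (IB l) (Dmap (X 0))
      rw [Δmap_xA]
      simp [Dmap, xB]
    · show Δmap l (yA l) = Ideal.Quotient.mk (IB l) (Dmap (X 1))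
      rw [Δmap_yA]
      simp [Dmap, tB, xB]

lemma Δmap_injective (l : ℕ) : Function.Injective (Δmap l) := by
  rw [injective_iff_map_eq_zero (Δmap l)]
  intro a ha
  obtain ⟨p, rfl⟩ := Ideal.Quotient.mk_surjective a
  rw [Δmap_mk, Ideal.Quotient.eq_zero_iff_mem, IB, Ideal.mem_span_singleton'] at ha
  obtain ⟨q, hq⟩ := ha
  have h := σmap_D l p
  rw [← hq, mul_comm, σmap_IB] at h
  exact h.symm

lemma xA_mem (l : ℕ) : xA l ∈ Iid l := Ideal.subset_span (Set.mem_insert _ _)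
lemma yA_mem (l : ℕ) : yA l ∈ Iid l :=
  Ideal.subset_span (Set.mem_insert_of_mem _ rfl)

lemma mul_pow_mem (l m r : ℕ) : xA l ^ m * yA l ^ r ∈ (Iid l ^ (m + r) : Ideal (Aq l)) := by
  rw [Ideal.IsTwoSided.pow_add]
  exact Ideal.mul_mem_mul (Ideal.pow_mem_pow (xA_mem l) m) (Ideal.pow_mem_pow (yA_mem l) r)

lemma exists_preimage (l : ℕ) (hl : 1 ≤ l) (b : Bq l) :
    ∃ a ∈ (Iid l ^ (l - 1) : Ideal (Aq l)), Δmap l a = xB l ^ (l - 1) * b := by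
  obtain ⟨p, rfl⟩ := Ideal.Quotient.mk_surjective b
  suffices h : ∀ j : ℕ, ∃ a ∈ (Iid l ^ (l - 1) : Ideal (Aq l)),
      Δmap l a = tB l ^ j * (xB l ^ (l - 1) * Ideal.Quotient.mk (IB l) p) by
    obtain ⟨a, ha, he⟩ := h 0
    exact ⟨a, ha, by simpa using he⟩
  induction p using MvPolynomial.induction_on with
  | C c =>
    intro j
    have hj : j % l < l := Nat.mod_lt _ hl
    refine ⟨c • (xA l ^ (l - 1 - j % l) * yA l ^ (j % l)), ?_, ?_⟩
    · rw [zsmul_eq_mul]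
      apply Ideal.mul_mem_left
      have he : l - 1 - j % l + j % l = l - 1 := by omega
      have hm := mul_pow_mem l (l - 1 - j % l) (j % l)
      rwa [he] at hm
    · rw [map_zsmul, map_mul, map_pow, map_pow, Δmap_xA, Δmap_yA, mul_pow,
        mk_C l, zsmul_eq_mul, tB_pow_mod l j]
      have hx : xB l ^ (l - 1) = xB l ^ (l - 1 - j % l) * xB l ^ (j % l) := by
        rw [← pow_add]
        congr 1
        omega
      rw [hx]
      ring
  | add p q hp hq =>
    intro j
    obtain ⟨a, ha, hea⟩ := hp j
    obtain ⟨a', ha', hea'⟩ := hq j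
    refine ⟨a + a', add_mem ha ha', ?_⟩
    have h2 : Ideal.Quotient.mk (IB l) (p + q)
        = Ideal.Quotient.mk (IB l) p + Ideal.Quotient.mk (IB l) q := map_add _ _ _
    rw [map_add, hea, hea', h2]
    ring
  | mul_X p i hp =>
    intro j
    have h2 : Ideal.Quotient.mk (IB l) (p * X i)
        = Ideal.Quotient.mk (IB l) p * Ideal.Quotient.mk (IB l) (X i) := map_mul _ _ _
    fin_cases i
    · obtain ⟨a, ha, he⟩ := hp j
      refine ⟨a * xA l, Ideal.mul_mem_right _ _ ha, ?_⟩
      rw [map_mul, he, Δmap_xA, h2]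
      show _ = tB l ^ j * (xB l ^ (l - 1) * (Ideal.Quotient.mk (IB l) p * xB l))
      ring
    · obtain ⟨a, ha, he⟩ := hp (j + 1)
      refine ⟨a, ha, ?_⟩
      rw [he, h2]
      show _ = tB l ^ j * (xB l ^ (l - 1) * (Ideal.Quotient.mk (IB l) p * tB l))
      ring

lemma Iid_def (l : ℕ) : Iid l = Ideal.span {xA l, yA l} := rfl

lemma image_sub (l : ℕ) (a : Aq l) (ha : a ∈ (Iid l ^ (l - 1) : Ideal (Aq l))) :
    ∃ c, Δmap l a = xB l ^ (l - 1) * c := by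
  have h1 : Δmap l a ∈ Ideal.map (Δmap l) (Iid l ^ (l - 1)) := Ideal.mem_map_of_mem _ ha
  have h2 : Ideal.map (Δmap l) (Iid l ^ (l - 1)) ≤ Ideal.span {xB l ^ (l - 1)} := by
    rw [Ideal.map_pow, ← Ideal.span_singleton_pow]
    refine Ideal.pow_right_mono ?_ _
    rw [Iid_def, Ideal.map_span, Set.image_insert_eq, Set.image_singleton, Δmap_xA, Δmap_yA,
      Ideal.span_le]
    rintro z hz
    rcases hz with rfl | hz
    · exact Ideal.mem_span_singleton.mpr dvd_rfl
    · rcases hz with rfl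
      exact Ideal.mem_span_singleton.mpr (Dvd.intro_left _ rfl)
  exact Ideal.mem_span_singleton.mp (h2 h1)

lemma algebraMap_eq_Δmap (l : ℕ) : algebraMap (Aq l) (Bq l) = Δmap l := rfl

/-- `Δ` maps `I^{l−1}` onto `x^{l−1}·B`: one has `Δ(I^{l−1}) = x^{l−1}·B`, and hence `Δ`
restricts to an isomorphism of `A`-modules from `I^{l−1}` to `x^{l−1}·B`. -/
theorem stmt_2 (l : ℕ) (hl : 1 ≤ l) :
    (Δmap l) '' ((Iid l ^ (l - 1) : Ideal (Aq l)) : Set (Aq l)) =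
      {b : Bq l | ∃ c : Bq l, b = xB l ^ (l - 1) * c} ∧
    Nonempty ((↥(Iid l ^ (l - 1))) ≃ₗ[Aq l] ↥(xmB l (l - 1))) := by
  constructor
  · ext b
    constructor
    · rintro ⟨a, ha, rfl⟩
      obtain ⟨c, hc⟩ := image_sub l a ha
      exact ⟨c, hc⟩
    · rintro ⟨c, rfl⟩
      obtain ⟨a, ha, he⟩ := exists_preimage l hl c
      exact ⟨a, ha, he⟩
  · refine ⟨LinearEquiv.ofBijective
      (LinearMap.codRestrict (xmB l (l - 1))
        ((Algebra.linearMap (Aq l) (Bq l)).comp (Submodule.subtype _)) ?_) ⟨?_, ?_⟩⟩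
    · rintro ⟨a, ha⟩
      obtain ⟨c, hc⟩ := image_sub l a ha
      refine LinearMap.mem_range.mpr ⟨c, ?_⟩
      show xB l ^ (l - 1) * c = algebraMap (Aq l) (Bq l) a
      rw [algebraMap_eq_Δmap, hc]
    · intro u v h
      apply Subtype.ext
      apply Δmap_injective l
      have h2 := congrArg Subtype.val h
      rw [← algebraMap_eq_Δmap]
      simpa using h2
    · rintro ⟨b, hb⟩
      obtain ⟨c, hc⟩ := LinearMap.mem_range.mp hb
      obtain ⟨a, ha, he⟩ := exists_preimage l hl c
      refine ⟨⟨a, ha⟩, Subtype.ext ?_⟩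
      show algebraMap (Aq l) (Bq l) a = b
      rw [algebraMap_eq_Δmap, he, ← hc]
      rfl
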